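/- If T and T' are trees of respective orders n and n' with n' ≥ n ≥ 2, then the decycling number of the Cartesian product T □ T' satisfies ∇(T □ T') ≥ n - 1. -/

import Mathlib

open SimpleGraph

/-- The star `S_m = K_{1,m-1}` on `m` vertices, with center the vertex `0`. -/
def starGraph (m : ℕ) : SimpleGraph (Fin m) where
  Adj i j := i ≠ j ∧ (i.val = 0 ∨ j.val = 0)
  symm := ⟨fun _ _ h => ⟨h.1.symm, h.2.symm⟩⟩
  loopless := ⟨fun _ h => h.1 rfl⟩

/-- The decycling number: the minimum size of a set of vertices whose removal
leaves an acyclic graph. -/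
noncomputable def decyclingNumber {V : Type*} [Fintype V] (G : SimpleGraph V) : ℕ :=
  sInf {k | ∃ S : Finset V, S.card = k ∧ (G.induce ((↑S : Set V)ᶜ)).IsAcyclic}

/-- The forest number: the maximum size of a set of vertices inducing a forest. -/
noncomputable def forestNumber {V : Type*} [Fintype V] (G : SimpleGraph V) : ℕ :=
  sSup {k | ∃ S : Finset V, S.card = k ∧ (G.induce (↑S : Set V)).IsAcyclic}

/-- The matching number: the maximum size of a set of pairwise non-incident edges. -/
noncomputable def matchingNumber {V : Type*} [Fintype V] (G : SimpleGraph V) : ℕ :=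
  sSup {k | ∃ M : Finset (Sym2 V), ↑M ⊆ G.edgeSet ∧
    (M : Set (Sym2 V)).Pairwise (fun e f => ∀ v, ¬(v ∈ e ∧ v ∈ f)) ∧ M.card = k}

theorem decycling_boxProd_trees_lower_bound
    {V W : Type*} [Fintype V] [Fintype W]
    (T : SimpleGraph V) (T' : SimpleGraph W) (n n' : ℕ)
    (hn : Fintype.card V = n) (hn' : Fintype.card W = n')
    (h2 : 2 ≤ n) (hnn' : n ≤ n')
    (hT : T.IsTree) (hT' : T'.IsTree) :
    n - 1 ≤ decyclingNumber (T.boxProd T') := by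
  classical
  by_contra hcon
  push_neg at hcon
  have hne : {k | ∃ S : Finset (V × W), S.card = k ∧
      ((T.boxProd T').induce ((↑S : Set (V × W))ᶜ)).IsAcyclic}.Nonempty := by
    refine ⟨(Finset.univ : Finset (V × W)).card, Finset.univ, rfl, ?_⟩
    intro v
    exact absurd (Set.mem_univ (↑v)) (by simpa using v.2)
  obtain ⟨S, hScard, hacyc⟩ := Nat.sInf_mem hne
  rw [decyclingNumber, ← hScard] at hcon
  -- Projections of S onto the two factors
  have hAcard : (S.image Prod.fst).card ≤ S.card := Finset.card_image_le
  have hBcard : (S.image Prod.snd).card ≤ S.card := Finset.card_image_le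
  have hAc : 1 < (S.image Prod.fst)ᶜ.card := by
    rw [Finset.card_compl, hn]; omega
  have hBc : 1 < (S.image Prod.snd)ᶜ.card := by
    rw [Finset.card_compl, hn']; omega
  obtain ⟨a, haA, b, hbA, hab⟩ := Finset.one_lt_card.mp hAc
  obtain ⟨c, hcB, d, hdB, hcd⟩ := Finset.one_lt_card.mp hBc
  rw [Finset.mem_compl] at haA hbA hcB hdB
  set s : Set (V × W) := (↑S : Set (V × W))ᶜ with hs
  have hmemA : ∀ (v : V), v ∉ S.image Prod.fst → ∀ w : W, (v, w) ∈ s := by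
    intro v hv w hvw
    exact hv (Finset.mem_image.mpr ⟨(v, w), hvw, rfl⟩)
  have hmemB : ∀ (w : W), w ∉ S.image Prod.snd → ∀ v : V, (v, w) ∈ s := by
    intro w hw v hvw
    exact hw (Finset.mem_image.mpr ⟨(v, w), hvw, rfl⟩)
  set Gi : SimpleGraph s := ((T.boxProd T').induce s) with hGi
  -- graph homomorphisms into Gi: columns a, b and rows c, d
  let fA : T' →g Gi := ⟨fun w => ⟨(a, w), hmemA a haA w⟩, fun h => Or.inr ⟨h, rfl⟩⟩
  let fB : T' →g Gi := ⟨fun w => ⟨(b, w), hmemA b hbA w⟩, fun h => Or.inr ⟨h, rfl⟩⟩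
  let fC : T →g Gi := ⟨fun v => ⟨(v, c), hmemB c hcB v⟩, fun h => Or.inl ⟨h, rfl⟩⟩
  let fD : T →g Gi := ⟨fun v => ⟨(v, d), hmemB d hdB v⟩, fun h => Or.inl ⟨h, rfl⟩⟩
  -- a path from a to b in T, and a walk from c to d in T'
  obtain ⟨⟨pw, hp⟩⟩ : Nonempty (T.Path a b) :=
    (hT.isConnected.preconnected a b).elim fun w => ⟨w.toPath⟩
  obtain ⟨q⟩ := hT'.isConnected.preconnected c d
  cases pw with
  | nil => exact hab rfl
  | cons h₁ p₁ =>
    rename_i v₁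
    have hav₁ : a ≠ v₁ := h₁.ne
    have hnodup := hp.isTrail.edges_nodup
    rw [Walk.edges_cons, List.nodup_cons] at hnodup
    have hfirst : s(a, v₁) ∉ p₁.edges := hnodup.1
    have hadj : Gi.Adj (fC a) (fC v₁) := Or.inl ⟨h₁, rfl⟩
    have hbr := (isAcyclic_iff_forall_adj_isBridge.mp hacyc) hadj
    rw [isBridge_iff] at hbr
    apply hbr
    -- the detour walk from (a,c) to (v₁,c) avoiding the edge s((a,c),(v₁,c))
    let W0 : Gi.Walk (fC a) (fC v₁) :=
      ((q.map fA : Gi.Walk (fA c) (fA d)) : Gi.Walk (fC a) (fD a)).append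
        ((((Walk.cons h₁ p₁).map fD) : Gi.Walk (fD a) (fD b)).append
          (((q.reverse.map fB : Gi.Walk (fB d) (fB c)) : Gi.Walk (fD b) (fC b)).append
            ((p₁.reverse.map fC) : Gi.Walk (fC b) (fC v₁))))
    have hW0 : ∀ e' ∈ W0.edges, e' ∉ ({s(fC a, fC v₁)} : Set (Sym2 s)) := by
      intro e' he' hmem
      rw [Set.mem_singleton_iff] at hmem
      subst hmem
      simp only [W0, Walk.edges_append, Walk.edges_map, List.mem_append, List.mem_map] at he'
      rcases he' with ⟨e0, he0, heq⟩ | ⟨e0, he0, heq⟩ | ⟨e0, he0, heq⟩ | ⟨e0, he0, heq⟩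
      · -- column a
        clear he0
        induction e0 using Sym2.inductionOn with
        | _ w1 w2 =>
          rw [Sym2.map_pair_eq, Sym2.eq_iff] at heq
          rcases heq with ⟨-, h2⟩ | ⟨h2, -⟩ <;>
          · have h3 : ((a : V), _) = ((v₁ : V), c) := congrArg Subtype.val h2
            exact hav₁ (congrArg Prod.fst h3)
      · -- row d
        clear he0
        induction e0 using Sym2.inductionOn with
        | _ u1 u2 =>
          rw [Sym2.map_pair_eq, Sym2.eq_iff] at heq
          rcases heq with ⟨h1, -⟩ | ⟨-, h1⟩ <;>
          · have h3 : ((_ : V), d) = ((a : V), c) := congrArg Subtype.val h1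
            exact hcd (congrArg Prod.snd h3).symm
      · -- column b
        clear he0
        induction e0 using Sym2.inductionOn with
        | _ w1 w2 =>
          rw [Sym2.map_pair_eq, Sym2.eq_iff] at heq
          rcases heq with ⟨h1, -⟩ | ⟨-, h1⟩ <;>
          · have h3 : ((b : V), _) = ((a : V), c) := congrArg Subtype.val h1
            exact hab (congrArg Prod.fst h3).symm
      · -- row c : the edge would have to be the first edge of the path p
        induction e0 using Sym2.inductionOn with
        | _ u1 u2 =>
          rw [Sym2.map_pair_eq, Sym2.eq_iff] at heq
          rw [Walk.edges_reverse, List.mem_reverse] at he0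
          apply hfirst
          rcases heq with ⟨h1, h2⟩ | ⟨h1, h2⟩
          · have h3 : u1 = a := congrArg Prod.fst (congrArg Subtype.val h1)
            have h4 : u2 = v₁ := congrArg Prod.fst (congrArg Subtype.val h2)
            subst h3; subst h4
            exact he0
          · have h3 : u1 = v₁ := congrArg Prod.fst (congrArg Subtype.val h1)
            have h4 : u2 = a := congrArg Prod.fst (congrArg Subtype.val h2)
            subst h3; subst h4
            rwa [Sym2.eq_swap] at he0
    exact ⟨(W0.toDeleteEdges {s(fC a, fC v₁)} hW0 :
      (Gi.deleteEdges {s(fC a, fC v₁)}).Walk (fC a) (fC v₁))⟩
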